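/- Let V : ℝ^m → ℝ be a function with V(0) = 0 and V(x) > 0 for all x ≠ 0, and let φ : ℝ^m → ℝ → ℝ^m be a map such that for every x ≠ 0: (i) φ(x)(0) = x; (ii) for every t > −V(x), φ(x)(t) ≠ 0 and V(φ(x)(t)) = V(x) + t; (iii) for every t > −V(x) and every s > −(V(x)+t), φ(φ(x)(t))(s) = φ(x)(t+s). Then for every c > 0, the map Φ(p, t) = φ(p)(t) from {p ∈ ℝ^m | V(p) = c} × (−c, ∞) to ℝ^m \ {0} is a bijection, with inverse given by x ↦ (φ(x)(c − V(x)), V(x) − c). -/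
import Mathlib


theorem stmt8 {m : ℕ} (V : EuclideanSpace ℝ (Fin m) → ℝ)
    (φ : EuclideanSpace ℝ (Fin m) → ℝ → EuclideanSpace ℝ (Fin m))
    (hV0 : V 0 = 0) (hVpos : ∀ x, x ≠ 0 → 0 < V x)
    (hφ0 : ∀ x, x ≠ 0 → φ x 0 = x)
    (hne : ∀ x, x ≠ 0 → ∀ t, -V x < t → φ x t ≠ 0)
    (hVt : ∀ x, x ≠ 0 → ∀ t, -V x < t → V (φ x t) = V x + t)
    (hflow : ∀ x, x ≠ 0 → ∀ t, -V x < t → ∀ s, -(V x + t) < s →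
      φ (φ x t) s = φ x (t + s))
    (c : ℝ) (hc : 0 < c) :
    Set.BijOn (fun p : EuclideanSpace ℝ (Fin m) × ℝ => φ p.1 p.2)
      ({p | V p = c} ×ˢ Set.Ioi (-c)) {x | x ≠ 0} ∧
    Set.InvOn (fun x => (φ x (c - V x), V x - c))
      (fun p : EuclideanSpace ℝ (Fin m) × ℝ => φ p.1 p.2)
      ({p | V p = c} ×ˢ Set.Ioi (-c)) {x | x ≠ 0} := by
  have hp0 : ∀ p : EuclideanSpace ℝ (Fin m), V p = c → p ≠ 0 := by
    intro p hp h0; rw [h0, hV0] at hp; linarith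
  have hmaps : Set.MapsTo (fun p : EuclideanSpace ℝ (Fin m) × ℝ => φ p.1 p.2)
      ({p | V p = c} ×ˢ Set.Ioi (-c)) {x | x ≠ 0} := by
    rintro ⟨p, t⟩ ⟨hp, ht⟩
    exact hne p (hp0 p hp) t (by rw [Set.mem_setOf_eq.mp hp]; exact ht)
  have hmaps' : Set.MapsTo (fun x => (φ x (c - V x), V x - c)) {x | x ≠ 0}
      ({p | V p = c} ×ˢ Set.Ioi (-c)) := by
    intro x hx
    have hVx := hVpos x hx
    have ht : -V x < c - V x := by linarith
    refine ⟨?_, ?_⟩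
    · show V (φ x (c - V x)) = c
      rw [hVt x hx _ ht]; ring
    · show V x - c ∈ Set.Ioi (-c)
      exact Set.mem_Ioi.2 (by linarith)
  have hinv : Set.InvOn (fun x => (φ x (c - V x), V x - c))
      (fun p : EuclideanSpace ℝ (Fin m) × ℝ => φ p.1 p.2)
      ({p | V p = c} ×ˢ Set.Ioi (-c)) {x | x ≠ 0} := by
    constructor
    · rintro ⟨p, t⟩ ⟨hp, ht⟩
      have hp' := hp0 p hp
      have hpc : V p = c := hp
      have htc : -c < t := ht
      have ht' : -V p < t := by rw [hpc]; exact htc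
      have hVφ : V (φ p t) = V p + t := hVt p hp' t ht'
      have hc' : c - V (φ p t) = -t := by rw [hVφ, hpc]; ring
      have hs : -(V p + t) < -t := by rw [hpc]; linarith
      simp only
      rw [hc', hflow p hp' t ht' (-t) hs]
      have : t + -t = 0 := by ring
      rw [this, hφ0 p hp', hVφ, hpc]
      exact Prod.ext rfl (by ring)
    · intro x hx
      have hx' : x ≠ 0 := hx
      have hVx := hVpos x hx'
      have ht : -V x < c - V x := by linarith
      have hy := hne x hx' _ ht
      have hs : -(V x + (c - V x)) < V x - c := by linarith
      simp only
      rw [hflow x hx' _ ht _ hs]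
      have : c - V x + (V x - c) = 0 := by ring
      rw [this, hφ0 x hx']
  exact ⟨hinv.bijOn hmaps hmaps', hinv⟩
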